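/- (Example 4.3) Let A ∈ ℍ^{3×3} be the matrix with rows (k, 0, 1), (0, k, 0) and (1, 0, k). Then the set of left eigenvalues of A is exactly {k, 1 + k, −1 + k}. -/

import Mathlib

open Matrix

/-- `λ` is a left eigenvalue of `A` if `A v = λ v` for some nonzero `v`. -/
def IsLeftEigenvalue {m : ℕ} (A : Matrix (Fin m) (Fin m) (Quaternion ℝ))
    (l : Quaternion ℝ) : Prop :=
  ∃ v : Fin m → Quaternion ℝ, v ≠ 0 ∧ A.mulVec v = l • v

/-- `λ` is a right eigenvalue of `A` if `A v = v λ` for some nonzero `v`. -/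
def IsRightEigenvalue {m : ℕ} (A : Matrix (Fin m) (Fin m) (Quaternion ℝ))
    (l : Quaternion ℝ) : Prop :=
  ∃ v : Fin m → Quaternion ℝ, v ≠ 0 ∧ A.mulVec v = fun s => v s * l

/-- Example 4.3: the left eigenvalues of
`[[k, 0, 1], [0, k, 0], [1, 0, k]]` are exactly `k`, `1 + k` and `−1 + k`. -/
theorem example_4_3 :
    {l : Quaternion ℝ |
        IsLeftEigenvalue
          (!![(⟨0, 0, 0, 1⟩ : Quaternion ℝ), 0, 1;
              0, (⟨0, 0, 0, 1⟩ : Quaternion ℝ), 0;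
              1, 0, (⟨0, 0, 0, 1⟩ : Quaternion ℝ)]) l} =
      {(⟨0, 0, 0, 1⟩ : Quaternion ℝ), 1 + (⟨0, 0, 0, 1⟩ : Quaternion ℝ),
        -1 + (⟨0, 0, 0, 1⟩ : Quaternion ℝ)} := by
  set K : Quaternion ℝ := ⟨0, 0, 0, 1⟩ with hK
  ext l
  simp only [Set.mem_setOf_eq, Set.mem_insert_iff, Set.mem_singleton_iff]
  constructor
  · rintro ⟨v, hv, hA⟩
    have h0 := congrFun hA 0
    have h1 := congrFun hA 1
    have h2 := congrFun hA 2
    simp [Matrix.mulVec, dotProduct, Fin.sum_univ_three] at h0 h1 h2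
    -- h0 : K * v 0 + v 2 = l * v 0, etc.
    by_cases hv0 : v 0 = 0
    · -- then v 2 = 0, so v 1 ≠ 0, and (l - K) * v 1 = 0
      have hv2 : v 2 = 0 := by
        have := h2
        rw [hv0] at h0 h2
        -- h2 : v 0 + K * v 2 = l * v 2 with v 0 = 0
        -- h0 : K * 0 + v 2 = l * 0
        simpa using h0
      have hv1 : v 1 ≠ 0 := by
        intro hv1
        apply hv
        funext i
        fin_cases i <;> simpa [hv0, hv1, hv2]
      rcases h1 with h | h
      · left; exact h.symm
      · exact absurd h hv1
    · -- v 0 ≠ 0 : (l - K)^2 = 1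
      have e2 : v 2 = (l - K) * v 0 := by
        rw [sub_mul]
        linear_combination (norm := noncomm_ring) h0
      have e0 : v 0 = (l - K) * v 2 := by
        rw [sub_mul]
        linear_combination (norm := noncomm_ring) h2
      have esq : ((l - K) * (l - K) - 1) * v 0 = 0 := by
        rw [sub_mul, mul_assoc, ← e2, ← e0]
        noncomm_ring
      have hsq : (l - K) * (l - K) - 1 = 0 := by
        rcases mul_eq_zero.mp esq with h | h
        · exact h
        · exact absurd h hv0
      have hfac : (l - K - 1) * (l - K + 1) = 0 := by
        linear_combination (norm := noncomm_ring) hsq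
      rcases mul_eq_zero.mp hfac with h | h
      · right; left
        rw [sub_sub, sub_eq_zero, add_comm] at h
        exact h
      · right; right
        show l = -1 + K
        rw [← sub_eq_zero, sub_add_eq_sub_sub, sub_neg_eq_add]
        exact (sub_add_eq_add_sub l K 1).symm.trans h
  · rintro (rfl | rfl | rfl)
    · refine ⟨![0, 1, 0], ?_, ?_⟩
      · intro h
        have := congrFun h 1
        simp at this
      · funext i
        fin_cases i <;> simp [Matrix.mulVec, dotProduct, Fin.sum_univ_three]
    · refine ⟨![1, 0, 1], ?_, ?_⟩
      · intro h
        have := congrFun h 0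
        simp at this
      · funext i
        show _ = (1 + K) * ![(1 : Quaternion ℝ), 0, 1] i
        fin_cases i <;>
          simp [Matrix.mulVec, dotProduct, Fin.sum_univ_three, mul_add, add_mul] <;>
          abel
    · refine ⟨![1, 0, -1], ?_, ?_⟩
      · intro h
        have := congrFun h 0
        simp at this
      · funext i
        show _ = (-1 + K) * ![(1 : Quaternion ℝ), 0, -1] i
        fin_cases i <;>
          simp [Matrix.mulVec, dotProduct, Fin.sum_univ_three, mul_add, add_mul] <;>
          abel
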